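/- Let G be an amenable group, R a division ring, and suppose the group ring R[G] has no non-trivial zero divisors. Then R[G] satisfies the two-sided Ore condition: for all α, σ ∈ R[G] with σ ≠ 0, there exist β, τ ∈ R[G] with τ ≠ 0 and βσ = τα, and there exist β', τ' ∈ R[G] with τ' ≠ 0 and σβ' = ατ'. -/

import Mathlib

open scoped Pointwise

/-- `G` is amenable in the sense of the Følner condition: every finite subset `Z ⊆ G` and
`ε > 0` admit a nonempty finite subset `X ⊆ G` with `|ZX \ X| < ε |X|`. -/
def FolnerAmenable (G : Type*) [Group G] [DecidableEq G] : Prop :=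
  ∀ (Z : Finset G) (ε : ℝ), 0 < ε →
    ∃ X : Finset G, X.Nonempty ∧ ((Z * X) \ X).card < ε * X.card

open MulOpposite

set_option linter.unusedSectionVars false

section Aux

variable {G : Type*} [Group G] [DecidableEq G] {R : Type*} [DivisionRing R]

noncomputable def mulRightLM (σ : MonoidAlgebra R G) :
    MonoidAlgebra R G →ₗ[R] MonoidAlgebra R G where
  toFun β := β * σ
  map_add' a b := add_mul a b σ
  map_smul' r a := smul_mul_assoc r a σ

noncomputable def embY (Y : Finset G) : ((↑Y : Type _) →₀ R) →ₗ[R] MonoidAlgebra R G :=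
  (MonoidAlgebra.coeffLinearEquiv R).symm.toLinearMap ∘ₗ Finsupp.lmapDomain R R Subtype.val

lemma embY_support (Y : Finset G) (v : (↑Y : Type _) →₀ R) :
    (embY Y v : MonoidAlgebra R G).coeff.support ⊆ Y := by
  show (Finsupp.mapDomain Subtype.val v).support ⊆ Y
  refine (Finsupp.mapDomain_support).trans ?_
  intro x hx
  simp only [Finset.mem_image] at hx
  obtain ⟨⟨y, hy⟩, -, rfl⟩ := hx
  exact hy

lemma key (Y S : Finset G) (hcard : (Y * S).card < 2 * Y.card)
    (σ α : MonoidAlgebra R G) (hσ : σ.coeff.support ⊆ S) (hα : α.coeff.support ⊆ S) :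
    ∃ β τ : MonoidAlgebra R G, ¬(β = 0 ∧ τ = 0) ∧ β * σ = τ * α := by
  classical
  set T : Finset G := Y * S with hT
  let Φ : (((↑Y : Type _) →₀ R) × ((↑Y : Type _) →₀ R)) →ₗ[R] ((↑T : Type _) →₀ R) :=
    (Finsupp.lsubtypeDomain (↑T : Set G)).comp
      ((MonoidAlgebra.coeffLinearEquiv R).toLinearMap.comp (((mulRightLM σ).comp ((embY Y).comp (LinearMap.fst R _ _))) -
       ((mulRightLM α).comp ((embY Y).comp (LinearMap.snd R _ _)))))
  have hnotinj : ¬ Function.Injective Φ := by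
    intro hinj
    have h1 := LinearMap.finrank_le_finrank_of_injective hinj
    have h2 : Module.finrank R (((↑Y : Type _) →₀ R) × ((↑Y : Type _) →₀ R)) = 2 * Y.card := by
      simp [Module.finrank_prod, Module.finrank_finsupp_self, two_mul]
    have h3 : Module.finrank R ((↑T : Type _) →₀ R) = T.card := by
      simp [Module.finrank_finsupp_self]
    omega
  rw [injective_iff_map_eq_zero] at hnotinj
  push_neg at hnotinj
  obtain ⟨p, hp0, hpne⟩ := hnotinj
  refine ⟨embY Y p.1, embY Y p.2, ?_, ?_⟩
  · rintro ⟨h1, h2⟩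
    apply hpne
    have hi : Function.Injective (embY (R := R) Y) :=
      (MonoidAlgebra.coeffLinearEquiv R).symm.injective.comp
        (Finsupp.mapDomain_injective Subtype.val_injective)
    have e1 : p.1 = 0 := hi (by simpa using h1)
    have e2 : p.2 = 0 := hi (by simpa using h2)
    exact Prod.ext e1 e2
  · have hsupp : (embY Y p.1 * σ - embY Y p.2 * α).coeff.support ⊆ T := by
      rw [MonoidAlgebra.coeff_sub]
      refine (Finsupp.support_sub).trans ?_
      apply Finset.union_subset
      · exact (MonoidAlgebra.support_coeff_mul_subset _ _).trans
          (Finset.mul_subset_mul (embY_support Y p.1) hσ)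
      · exact (MonoidAlgebra.support_coeff_mul_subset _ _).trans
          (Finset.mul_subset_mul (embY_support Y p.2) hα)
    have hz : Finsupp.subtypeDomain (· ∈ (↑T : Set G))
        (embY Y p.1 * σ - embY Y p.2 * α).coeff = 0 := hp0
    have hz2 : (embY Y p.1 * σ - embY Y p.2 * α) = 0 := MonoidAlgebra.coeff_eq_zero.mp <|
      (Finsupp.subtypeDomain_eq_zero_iff (p := fun x => x ∈ (↑T : Set G))
        (fun x hx => hsupp hx)).mp hz
    exact sub_eq_zero.mp hz2

lemma leftOre (hG : FolnerAmenable G)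
    (hnzd : ∀ a b : MonoidAlgebra R G, a * b = 0 → a = 0 ∨ b = 0)
    (α σ : MonoidAlgebra R G) (hσ : σ ≠ 0) :
    ∃ β τ : MonoidAlgebra R G, τ ≠ 0 ∧ β * σ = τ * α := by
  classical
  set S : Finset G := σ.coeff.support ∪ α.coeff.support with hS
  obtain ⟨X, hXne, hXcard⟩ := hG S⁻¹ 1 one_pos
  have hXcard' : ((S⁻¹ * X) \ X).card < X.card := by
    have := hXcard
    rw [one_mul] at this
    exact_mod_cast this
  have hcard : (X⁻¹ * S).card < 2 * X⁻¹.card := by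
    have h1 : (X⁻¹ * S) = (S⁻¹ * X)⁻¹ := by
      rw [mul_inv_rev, inv_inv]
    have h2 : (X⁻¹ * S).card = (S⁻¹ * X).card := by rw [h1, Finset.card_inv]
    have h3 : (S⁻¹ * X).card ≤ ((S⁻¹ * X) \ X).card + X.card :=
      Finset.card_le_card_sdiff_add_card
    have h4 : X⁻¹.card = X.card := Finset.card_inv X
    omega
  obtain ⟨β, τ, hne, heq⟩ := key X⁻¹ S hcard σ α
    (Finset.subset_union_left) (Finset.subset_union_right)
  refine ⟨β, τ, ?_, heq⟩
  intro hτ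
  apply hne
  subst hτ
  rw [zero_mul] at heq
  rcases hnzd β σ heq with h | h
  · exact ⟨h, rfl⟩
  · exact absurd h hσ

lemma folner_op (hG : FolnerAmenable G) : FolnerAmenable Gᵐᵒᵖ := by
  intro Z' ε hε
  classical
  set W : Finset G := Z'.image (fun z => (unop z)⁻¹) with hW
  obtain ⟨X, hXne, hXcard⟩ := hG W ε hε
  refine ⟨(X⁻¹).image op, (hXne.inv).image _, ?_⟩
  have hcardX : ((X⁻¹).image op).card = X.card := by
    rw [Finset.card_image_of_injective _ op_injective, Finset.card_inv]
  have hle : ((Z' * (X⁻¹).image op) \ (X⁻¹).image op).card ≤ ((W * X) \ X).card := by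
    apply Finset.card_le_card_of_injOn (fun x' => (unop x')⁻¹)
    · intro x' hx'
      rw [Finset.mem_coe, Finset.mem_sdiff] at hx'
      rw [Finset.mem_coe, Finset.mem_sdiff]
      obtain ⟨hx1, hx2⟩ := hx'
      constructor
      · rw [Finset.mem_mul] at hx1 ⊢
        obtain ⟨z, hz, y, hy, rfl⟩ := hx1
        rw [Finset.mem_image] at hy
        obtain ⟨y₀, hy₀, rfl⟩ := hy
        rw [Finset.mem_inv'] at hy₀
        exact ⟨(unop z)⁻¹, Finset.mem_image.mpr ⟨z, hz, rfl⟩, y₀⁻¹, hy₀,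
          by simp [mul_inv_rev]⟩
      · intro hmem
        exact hx2 (Finset.mem_image.mpr ⟨unop x', Finset.mem_inv'.mpr hmem, rfl⟩)
    · intro a _ b _ h
      have : unop a = unop b := by
        have := congrArg (·⁻¹) h
        simpa using this
      exact unop_injective this
  calc (((Z' * (X⁻¹).image op) \ (X⁻¹).image op).card : ℝ)
      ≤ ((W * X) \ X).card := by exact_mod_cast hle
    _ < ε * X.card := hXcard
    _ = ε * ((X⁻¹).image op).card := by rw [hcardX]

end Aux

/-- **Tamari.** If `G` is amenable and the group ring `R[G]` over a division
ring `R` has no non-trivial zero divisors, then `R[G]` satisfies the two-sided Ore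
condition. -/
theorem ore_condition_of_amenable
    (G : Type*) [Group G] [DecidableEq G] (R : Type*) [DivisionRing R]
    (hG : FolnerAmenable G)
    (hnzd : ∀ a b : MonoidAlgebra R G, a * b = 0 → a = 0 ∨ b = 0) :
    ∀ α σ : MonoidAlgebra R G, σ ≠ 0 →
      (∃ β τ : MonoidAlgebra R G, τ ≠ 0 ∧ β * σ = τ * α) ∧
      (∃ β' τ' : MonoidAlgebra R G, τ' ≠ 0 ∧ σ * β' = α * τ') := by
  intro α σ hσ
  classical
  constructor
  · exact leftOre hG hnzd α σ hσ
  · letI : DecidableEq Gᵐᵒᵖ := fun a b => decidable_of_iff _ unop_injective.eq_iff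
    set e : (MonoidAlgebra R G)ᵐᵒᵖ ≃+* MonoidAlgebra Rᵐᵒᵖ Gᵐᵒᵖ :=
      MonoidAlgebra.opRingEquiv with he
    have hnzd' : ∀ a b : MonoidAlgebra Rᵐᵒᵖ Gᵐᵒᵖ, a * b = 0 → a = 0 ∨ b = 0 := by
      intro a b hab
      have h0 : e.symm a * e.symm b = 0 := by
        rw [← map_mul, hab, map_zero]
      have h1 : unop (e.symm b) * unop (e.symm a) = 0 := by
        rw [← unop_mul, h0, unop_zero]
      rcases hnzd _ _ h1 with h | h
      · right
        have : e.symm b = 0 := unop_injective (by simpa using h)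
        simpa using congrArg e this
      · left
        have : e.symm a = 0 := unop_injective (by simpa using h)
        simpa using congrArg e this
    have hσ' : e (op σ) ≠ 0 := by
      intro h
      apply hσ
      have := congrArg e.symm h
      simp only [RingEquiv.symm_apply_apply, map_zero] at this
      simpa using this
    obtain ⟨β, τ, hτ, heq⟩ := leftOre (folner_op hG) hnzd' (e (op α)) (e (op σ)) hσ'
    refine ⟨unop (e.symm β), unop (e.symm τ), ?_, ?_⟩
    · intro h
      apply hτ
      have : e.symm τ = 0 := unop_injective (by simpa using h)
      simpa using congrArg e this
    · have hb : β = e (op (unop (e.symm β))) := by simp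
      have ht : τ = e (op (unop (e.symm τ))) := by simp
      rw [hb, ht] at heq
      rw [← map_mul, ← map_mul] at heq
      have h1 := e.injective heq
      rw [← op_mul, ← op_mul] at h1
      exact op_injective h1
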